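/- Let P = ({θ_i}_{i=0}^d; {θ*_i}_{i=0}^d; {φ_i}_{i=1}^d; {ϕ_i}_{i=1}^d) be a parameter array of diameter d ≥ 1 over a field K, let ξ, ζ, ξ*, ζ* be scalars in K with ξ, ξ* nonzero, and set α = (θ*_d − θ*_0)(θ_d − θ_0)^{−1}. Then at least one of the four parameter arrays P^*, P^↓*, P^⇓*, P^↓⇓* equals ({ξθ_i+ζ}; {ξ*θ*_i+ζ*}; {ξξ*φ_i}; {ξξ*ϕ_i}) if and only if at least one of the following holds: (i) ϕ_1 = ϕ_d, ξ = α, ζ = θ*_0 − αθ_0, ξ* = α^{−1}, ζ* = θ_0 − α^{−1}θ*_0; (ii) φ_1 = φ_d = −ϕ_1 = −ϕ_d, ξ = −α, ζ = θ*_d + αθ_0, ξ* = α^{−1}, ζ* = θ_0 − α^{−1}θ*_0; (iii) φ_1 = φ_d = −ϕ_1 = −ϕ_d, ξ = α, ζ = θ*_0 − αθ_0, ξ* = −α^{−1}, ζ* = θ_0 + α^{−1}θ*_d; (iv) φ_1 = φ_d, ξ = −α, ζ = θ*_d + αθ_0, ξ* = −α^{−1}, ζ* = θ_0 + α^{−1}θ*_d.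 Moreover, in this case precisely one of (i)–(iv) holds. (Equivalently: the Leonard pair A*, A is isomorphic to the Leonard pair ξA+ζI, ξ*A*+ζ*I if and only if at least one, and then exactly one, of (i)–(iv) holds.) -/

import Mathlib

/-- A parameter array of diameter `d` over a field `K`:
conditions (PA1)–(PA5) of Terwilliger's classification of Leonard systems. -/
def IsParamArray (K : Type*) [Field K] (d : ℕ) (θ θs φ ϕ : ℕ → K) : Prop :=
  -- (PA1)
  (∀ i, 1 ≤ i → i ≤ d → φ i ≠ 0 ∧ ϕ i ≠ 0) ∧
  -- (PA2)
  (∀ i j, i ≤ d → j ≤ d → i ≠ j → θ i ≠ θ j ∧ θs i ≠ θs j) ∧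
  -- (PA3)
  (∀ i, 1 ≤ i → i ≤ d →
    φ i = ϕ 1 * (∑ h ∈ Finset.range i, (θ h - θ (d - h)) / (θ 0 - θ d))
      + (θs i - θs 0) * (θ (i - 1) - θ d)) ∧
  -- (PA4)
  (∀ i, 1 ≤ i → i ≤ d →
    ϕ i = φ 1 * (∑ h ∈ Finset.range i, (θ h - θ (d - h)) / (θ 0 - θ d))
      + (θs i - θs 0) * (θ (d - i + 1) - θ 0)) ∧
  -- (PA5)
  (∀ i j, 2 ≤ i → i ≤ d - 1 → 2 ≤ j → j ≤ d - 1 →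
    (θ (i - 2) - θ (i + 1)) / (θ (i - 1) - θ i)
      = (θs (i - 2) - θs (i + 1)) / (θs (i - 1) - θs i) ∧
    (θ (i - 2) - θ (i + 1)) / (θ (i - 1) - θ i)
      = (θ (j - 2) - θ (j + 1)) / (θ (j - 1) - θ j))

/-- Equality of two parameter arrays of diameter `d`
(each given as a quadruple of sequences `(θ, θ*, φ, ϕ)`). -/
def EqPA (K : Type*) (d : ℕ)
    (P Q : (ℕ → K) × (ℕ → K) × (ℕ → K) × (ℕ → K)) : Prop :=
  (∀ i ≤ d, P.1 i = Q.1 i ∧ P.2.1 i = Q.2.1 i) ∧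
  (∀ i, 1 ≤ i → i ≤ d → P.2.2.1 i = Q.2.2.1 i ∧ P.2.2.2 i = Q.2.2.2 i)


namespace LeonardSwapAux

variable {K : Type*} [Field K]

def cheb (γ : K) : ℕ → K
  | 0 => -1
  | 1 => 0
  | (n+2) => γ * cheb γ (n+1) - cheb γ n

lemma cheb_rec (γ : K) (n : ℕ) : cheb γ (n+2) = γ * cheb γ (n+1) - cheb γ n := rfl

lemma expand {d : ℕ} {γ : K} {x : ℕ → K}
    (hx : ∀ i, 2 ≤ i → i ≤ d - 1 → x (i+1) = γ * x i - x (i-1)) :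
    ∀ i, 1 ≤ i → i ≤ d → x i = -(x 1) * cheb γ (i-1) + x 2 * cheb γ i := by
  intro i
  induction i using Nat.strong_induction_on with
  | _ i ih =>
    match i with
    | 0 => intro h1 _; omega
    | 1 => intro _ _; simp [cheb]
    | 2 => intro _ _; simp [cheb]
    | (k+3) =>
      intro h1 h2
      have e := hx (k+2) (by omega) (by omega)
      have i1 := ih (k+2) (by omega) (by omega) (by omega)
      have i2 := ih (k+1) (by omega) (by omega) (by omega)
      simp only [show (k+2) - 1 = k+1 from rfl, show (k+1) - 1 = k from rfl,
        show (k+3) - 1 = k+2 from rfl, show (k+2) + 1 = k+3 from rfl] at e i1 i2 ⊢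
      rw [e, i1, i2,
        show cheb γ (k+3) = γ * cheb γ (k+2) - cheb γ (k+1) from rfl,
        show cheb γ (k+2) = γ * cheb γ (k+1) - cheb γ k from rfl]
      ring

lemma core (d : ℕ) (hd : 3 ≤ d) (γ : K) (Δ x : ℕ → K)
    (hΔ : ∀ i, 2 ≤ i → i ≤ d - 1 → Δ (i+1) = γ * Δ i - Δ (i-1))
    (hx : ∀ i, 2 ≤ i → i ≤ d - 1 → x (i+1) = γ * x i - x (i-1))
    (h1 : ∑ i ∈ Finset.range d, Δ (i+1) ≠ 0)
    (h2 : ∑ i ∈ Finset.range (d-1), Δ (i+2) ≠ 0)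
    (hx1 : x 1 = 0)
    (hxs : ∑ i ∈ Finset.range d, x (i+1) = 0) :
    ∀ i, 1 ≤ i → i ≤ d → x i = 0 := by
  obtain ⟨e, rfl⟩ : ∃ e, d = e + 3 := ⟨d - 3, by omega⟩
  by_cases hx2 : x 2 = 0
  · intro i hi1 hid
    have h := expand hx i hi1 hid
    rw [hx1, hx2] at h; simpa using h
  · exfalso
    have hexp : ∀ i, 1 ≤ i → i ≤ e + 3 → x i = x 2 * cheb γ i := by
      intro i hi1 hid
      have h := expand hx i hi1 hid
      rw [hx1] at h; simpa using h
    have hS : ∑ i ∈ Finset.range (e+3), cheb γ (i+1) = 0 := by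
      have h := hxs
      have hterm : ∀ i ∈ Finset.range (e+3), x (i+1) = x 2 * cheb γ (i+1) := by
        intro i hi
        simp at hi
        exact hexp (i+1) (by omega) (by omega)
      rw [Finset.sum_congr rfl hterm, ← Finset.mul_sum] at h
      rcases mul_eq_zero.mp h with h' | h'
      · exact absurd h' hx2
      · exact h'
    have htail : ∑ i ∈ Finset.range (e+2), cheb γ (i+1) = - cheb γ (e+3) := by
      have h := Finset.sum_range_succ (fun i => cheb γ (i+1)) (e+2)
      simp only [show e+2+1 = e+3 from rfl] at h
      rw [h] at hS
      linear_combination hS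
    have hS0 : ∑ i ∈ Finset.range (e+3), cheb γ i = -1 - cheb γ (e+3) := by
      have h := Finset.sum_range_succ' (fun i => cheb γ i) (e+2)
      simp only [show e+2+1 = e+3 from rfl] at h
      rw [htail, show cheb γ 0 = -1 from rfl] at h
      rw [h]; ring
    have hS2 : ∑ i ∈ Finset.range (e+2), cheb γ (i+2) = 0 := by
      have h := Finset.sum_range_succ' (fun i => cheb γ (i+1)) (e+2)
      simp only [show e+2+1 = e+3 from rfl] at h
      rw [show (∑ i ∈ Finset.range (e+2), cheb γ (i+1+1))
          = ∑ i ∈ Finset.range (e+2), cheb γ (i+2) from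
        Finset.sum_congr rfl (fun i _ => rfl)] at h
      rw [hS, show cheb γ (0+1) = 0 from rfl] at h
      linear_combination -h
    have hy : ∀ i, 2 ≤ i → i ≤ (e+3) - 1 →
        (fun i => cheb γ (e+4-i)) (i+1) = γ * (fun i => cheb γ (e+4-i)) i
          - (fun i => cheb γ (e+4-i)) (i-1) := by
      intro i hi1 hi2
      simp only []
      rw [show e+4-(i+1) = e+3-i by omega, show e+4-(i-1) = e+5-i by omega]
      have h := cheb_rec γ (e+3-i)
      rw [show e+3-i+2 = e+5-i by omega, show e+3-i+1 = e+4-i by omega] at h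
      linear_combination h
    have hyexp := expand (d := e+3) (γ := γ) (x := fun i => cheb γ (e+4-i)) hy
    have hrev : ∑ i ∈ Finset.range (e+3), cheb γ (e+3-i) = 0 := by
      have h := Finset.sum_range_reflect (fun j => cheb γ (j+1)) (e+3)
      rw [hS] at h
      rw [← h]
      exact Finset.sum_congr rfl (fun i hi => by
        simp at hi; exact congrArg (cheb γ) (by omega))
    have hyeval : ∑ i ∈ Finset.range (e+3), cheb γ (e+3-i)
        = - cheb γ (e+3) * (-1 - cheb γ (e+3)) := by
      have hterm : ∀ i ∈ Finset.range (e+3), cheb γ (e+3-i)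
          = -(cheb γ (e+3)) * cheb γ i + cheb γ (e+2) * cheb γ (i+1) := by
        intro i hi
        simp at hi
        have h := hyexp (i+1) (by omega) (by omega)
        rw [show e+4-(i+1) = e+3-i by omega, show e+4-1 = e+3 from rfl,
          show e+4-2 = e+2 from rfl, show (i+1)-1 = i from rfl] at h
        exact h
      rw [Finset.sum_congr rfl hterm, Finset.sum_add_distrib, ← Finset.mul_sum,
        ← Finset.mul_sum, hS0, hS]
      ring
    have hkey : cheb γ (e+3) * (1 + cheb γ (e+3)) = 0 := by
      rw [hrev] at hyeval
      linear_combination -hyeval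
    have hΔexp := expand hΔ
    have hsum1 : ∑ i ∈ Finset.range (e+3), Δ (i+1) = Δ 1 * (1 + cheb γ (e+3)) := by
      have hterm : ∀ i ∈ Finset.range (e+3), Δ (i+1)
          = -(Δ 1) * cheb γ i + Δ 2 * cheb γ (i+1) := by
        intro i hi
        simp at hi
        have h := hΔexp (i+1) (by omega) (by omega)
        rw [show (i+1)-1 = i from rfl] at h
        exact h
      rw [Finset.sum_congr rfl hterm, Finset.sum_add_distrib, ← Finset.mul_sum,
        ← Finset.mul_sum, hS0, hS]
      ring
    have hsum2 : ∑ i ∈ Finset.range (e+2), Δ (i+2) = Δ 1 * cheb γ (e+3) := by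
      have hterm : ∀ i ∈ Finset.range (e+2), Δ (i+2)
          = -(Δ 1) * cheb γ (i+1) + Δ 2 * cheb γ (i+2) := by
        intro i hi
        simp at hi
        have h := hΔexp (i+2) (by omega) (by omega)
        rw [show (i+2)-1 = i+1 from rfl] at h
        exact h
      rw [Finset.sum_congr rfl hterm, Finset.sum_add_distrib, ← Finset.mul_sum,
        ← Finset.mul_sum, htail, hS2]
      ring
    rw [show e+3-1 = e+2 from rfl] at h2
    have hne := mul_ne_zero h1 h2
    rw [hsum1, hsum2] at hne
    exact hne (by linear_combination (Δ 1)^2 * hkey)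

lemma vartheta_split (d : ℕ) (θ : ℕ → K) (k : ℕ) (hk : k ≤ d + 1) :
    ∑ h ∈ Finset.range k, (θ h - θ (d - h)) / (θ 0 - θ d)
      = ∑ h ∈ Finset.range (d + 1 - k), (θ h - θ (d - h)) / (θ 0 - θ d) := by
  set g : ℕ → K := fun h => (θ h - θ (d - h)) / (θ 0 - θ d) with hg
  have htot : ∑ h ∈ Finset.range (d+1), g h = 0 := by
    have hrefl : ∑ h ∈ Finset.range (d+1), θ (d - h) = ∑ h ∈ Finset.range (d+1), θ h := by
      have := Finset.sum_range_reflect (fun h => θ h) (d+1)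
      rw [← this]
      exact Finset.sum_congr rfl (fun i hi => by simp at hi; exact congrArg θ (by omega))
    have : ∑ h ∈ Finset.range (d+1), g h
        = (∑ h ∈ Finset.range (d+1), (θ h - θ (d-h))) / (θ 0 - θ d) := by
      rw [Finset.sum_div]
    rw [this, Finset.sum_sub_distrib, hrefl, sub_self, zero_div]
  have hsplit : ∑ h ∈ Finset.range k, g h + ∑ h ∈ Finset.Ico k (d+1), g h
      = ∑ h ∈ Finset.range (d+1), g h := by
    rw [Finset.range_eq_Ico, Finset.range_eq_Ico]
    exact Finset.sum_Ico_consecutive g (Nat.zero_le k) hk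
  have htail : ∑ h ∈ Finset.Ico k (d+1), g h = - ∑ h ∈ Finset.range (d+1-k), g h := by
    rw [Finset.sum_Ico_eq_sum_range]
    have hrefl2 : ∑ j ∈ Finset.range (d+1-k), g (k + j)
        = ∑ j ∈ Finset.range (d+1-k), g (d - j) := by
      have := Finset.sum_range_reflect (fun j => g (k + j)) (d+1-k)
      rw [← this]
      exact Finset.sum_congr rfl (fun j hj => by simp at hj; exact congrArg g (by omega))
    rw [hrefl2, ← Finset.sum_neg_distrib]
    refine Finset.sum_congr rfl (fun j hj => ?_)
    simp only [Finset.mem_range] at hj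
    rw [hg]
    simp only []
    rw [show d - (d - j) = j by omega]
    rw [← neg_div, neg_sub]
  rw [htail] at hsplit
  rw [htot] at hsplit
  linear_combination hsplit

lemma vartheta_sym (d : ℕ) (θ : ℕ → K) (i : ℕ) (hi1 : 1 ≤ i) (hid : i ≤ d) :
    ∑ h ∈ Finset.range (d - i + 1), (θ h - θ (d - h)) / (θ 0 - θ d)
      = ∑ h ∈ Finset.range i, (θ h - θ (d - h)) / (θ 0 - θ d) := by
  have := vartheta_split d θ (d - i + 1) (by omega)
  rw [show d + 1 - (d - i + 1) = i by omega] at this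
  exact this

lemma vartheta_d (d : ℕ) (hd : 1 ≤ d) (θ : ℕ → K) (h : θ 0 ≠ θ d) :
    ∑ h ∈ Finset.range d, (θ h - θ (d - h)) / (θ 0 - θ d) = 1 := by
  have := vartheta_sym d θ 1 le_rfl hd
  rw [show d - 1 + 1 = d by omega] at this
  rw [this]
  rw [Finset.sum_range_one, Nat.sub_zero, div_self (sub_ne_zero.mpr h)]

section PA
set_option linter.unusedSectionVars false
variable (d : ℕ) (θ θs φ ϕ : ℕ → K) (hd : 1 ≤ d) (hPA : IsParamArray K d θ θs φ ϕ)
include hPA hd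

lemma star_id : ∀ i, 1 ≤ i → i ≤ d →
    ϕ i - ϕ (d - i + 1) = (θs i - θs 0) * (θ (d - i + 1) - θ 0)
      - (θs (d - i + 1) - θs 0) * (θ i - θ 0) := by
  intro i hi1 hid
  obtain ⟨-, -, -, pa4, -⟩ := hPA
  have h1 := pa4 i hi1 hid
  have h2 := pa4 (d - i + 1) (by omega) (by omega)
  rw [show d - (d - i + 1) + 1 = i by omega] at h2
  have hsym := vartheta_sym d θ i hi1 hid
  linear_combination h1 - h2 - φ 1 * hsym

lemma star_id' : ∀ i, 1 ≤ i → i ≤ d →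
    φ i - φ (d - i + 1) = (θs i - θs 0) * (θ (i - 1) - θ d)
      - (θs (d - i + 1) - θs 0) * (θ (d - i) - θ d) := by
  intro i hi1 hid
  obtain ⟨-, -, pa3, -, -⟩ := hPA
  have h1 := pa3 i hi1 hid
  have h2 := pa3 (d - i + 1) (by omega) (by omega)
  rw [show d - i + 1 - 1 = d - i by omega] at h2
  have hsym := vartheta_sym d θ i hi1 hid
  linear_combination h1 - h2 - ϕ 1 * hsym

lemma sum_id : ∀ i, 1 ≤ i → i ≤ d →
    φ i + ϕ i = (ϕ 1 + φ 1) * (∑ h ∈ Finset.range i, (θ h - θ (d - h)) / (θ 0 - θ d))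
      + (θs i - θs 0) * ((θ (i - 1) - θ d) + (θ (d - i + 1) - θ 0)) := by
  intro i hi1 hid
  obtain ⟨-, -, pa3, pa4, -⟩ := hPA
  have h1 := pa3 i hi1 hid
  have h2 := pa4 i hi1 hid
  linear_combination h1 + h2

lemma s1_id : ϕ 1 - ϕ d = (θs 1 - θs 0) * (θ d - θ 0) - (θs d - θs 0) * (θ 1 - θ 0) := by
  obtain ⟨-, pa2, -, pa4, -⟩ := hPA
  have h0d : θ 0 ≠ θ d := (pa2 0 d (by omega) le_rfl (by omega)).1
  have h1 := pa4 1 le_rfl hd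
  have h2 := pa4 d hd le_rfl
  rw [show d - 1 + 1 = d by omega] at h1
  rw [show d - d + 1 = 1 by omega] at h2
  rw [vartheta_d d hd θ h0d] at h2
  rw [Finset.sum_range_one, Nat.sub_zero, div_self (sub_ne_zero.mpr h0d)] at h1
  linear_combination h1 - h2

lemma t1_id : φ 1 - φ d = (θs 1 - θs 0) * (θ 0 - θ d) - (θs d - θs 0) * (θ (d-1) - θ d) := by
  obtain ⟨-, pa2, pa3, -, -⟩ := hPA
  have h0d : θ 0 ≠ θ d := (pa2 0 d (by omega) le_rfl (by omega)).1
  have h1 := pa3 1 le_rfl hd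
  have h2 := pa3 d hd le_rfl
  rw [show (1:ℕ) - 1 = 0 from rfl] at h1
  rw [vartheta_d d hd θ h0d] at h2
  rw [Finset.sum_range_one, Nat.sub_zero, div_self (sub_ne_zero.mpr h0d)] at h1
  linear_combination h1 - h2

end PA

lemma lemA (d : ℕ) (hd : 1 ≤ d) (θ θs φ ϕ : ℕ → K)
    (hPA : IsParamArray K d θ θs φ ϕ) (h : ϕ 1 = ϕ d) :
    ∀ i ≤ d, (θs i - θs 0) * (θ d - θ 0) = (θs d - θs 0) * (θ i - θ 0) := by
  have hs1 := s1_id d θ θs φ ϕ hd hPA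
  obtain ⟨-, pa2, -, -, pa5⟩ := hPA
  rcases Nat.lt_or_ge d 3 with hd3 | hd3
  · -- d = 1 or 2
    intro i hid
    interval_cases d
    · interval_cases i
      · ring
      · ring
    · interval_cases i
      · ring
      · linear_combination h - hs1
      · ring
  · -- d ≥ 3
    have hrecθ : ∀ i, 2 ≤ i → i ≤ d - 1 →
        θ (i-2) - θ (i+1) = ((θ 0 - θ 3)/(θ 1 - θ 2)) * (θ (i-1) - θ i) := by
      intro i h2 h3
      have hne : θ (i-1) ≠ θ i := (pa2 (i-1) i (by omega) (by omega) (by omega)).1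
      have hr := (pa5 i 2 h2 h3 le_rfl (by omega)).2
      norm_num at hr
      rw [div_eq_iff (sub_ne_zero.mpr hne)] at hr
      exact hr
    have hrecθs : ∀ i, 2 ≤ i → i ≤ d - 1 →
        θs (i-2) - θs (i+1) = ((θ 0 - θ 3)/(θ 1 - θ 2)) * (θs (i-1) - θs i) := by
      intro i h2 h3
      have hne : θs (i-1) ≠ θs i := (pa2 (i-1) i (by omega) (by omega) (by omega)).2
      have hr1 := (pa5 i 2 h2 h3 le_rfl (by omega)).1
      have hr2 := (pa5 i 2 h2 h3 le_rfl (by omega)).2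
      norm_num at hr2
      have hr := hr1.symm.trans hr2
      rw [div_eq_iff (sub_ne_zero.mpr hne)] at hr
      exact hr
    have hΔ : ∀ i, 2 ≤ i → i ≤ d - 1 →
        (fun n => θ n - θ (n-1)) (i+1) = ((θ 0 - θ 3)/(θ 1 - θ 2) - 1) * (fun n => θ n - θ (n-1)) i
          - (fun n => θ n - θ (n-1)) (i-1) := by
      intro i h2 h3
      simp only []
      rw [show i+1-1 = i from rfl, show i-1-1 = i-2 by omega]
      linear_combination - hrecθ i h2 h3
    have hδ : ∀ i, 2 ≤ i → i ≤ d - 1 →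
        (fun n => (θ d - θ 0) * (θs n - θs (n-1)) - (θs d - θs 0) * (θ n - θ (n-1))) (i+1)
          = ((θ 0 - θ 3)/(θ 1 - θ 2) - 1) *
            (fun n => (θ d - θ 0) * (θs n - θs (n-1)) - (θs d - θs 0) * (θ n - θ (n-1))) i
          - (fun n => (θ d - θ 0) * (θs n - θs (n-1)) - (θs d - θs 0) * (θ n - θ (n-1))) (i-1) := by
      intro i h2 h3
      simp only []
      rw [show i+1-1 = i from rfl, show i-1-1 = i-2 by omega]
      linear_combination (θs d - θs 0) * hrecθ i h2 h3 - (θ d - θ 0) * hrecθs i h2 h3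
    have h1 : ∑ i ∈ Finset.range d, ((fun n => θ n - θ (n-1)) (i+1)) ≠ 0 := by
      rw [show (∑ i ∈ Finset.range d, ((fun n => θ n - θ (n-1)) (i+1)))
          = ∑ i ∈ Finset.range d, (θ (i+1) - θ i) from Finset.sum_congr rfl (fun i _ => rfl)]
      rw [Finset.sum_range_sub θ d]
      exact sub_ne_zero.mpr ((pa2 d 0 le_rfl (by omega) (by omega)).1)
    have h2 : ∑ i ∈ Finset.range (d-1), ((fun n => θ n - θ (n-1)) (i+2)) ≠ 0 := by
      rw [show (∑ i ∈ Finset.range (d-1), ((fun n => θ n - θ (n-1)) (i+2)))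
          = ∑ i ∈ Finset.range (d-1), (θ (i+1+1) - θ (i+1)) from Finset.sum_congr rfl (fun i _ => rfl)]
      rw [Finset.sum_range_sub (fun n => θ (n+1)) (d-1)]
      rw [show d-1+1 = d by omega, show (0:ℕ)+1 = 1 from rfl]
      exact sub_ne_zero.mpr ((pa2 d 1 le_rfl (by omega) (by omega)).1)
    have hx1 : (fun n => (θ d - θ 0) * (θs n - θs (n-1)) - (θs d - θs 0) * (θ n - θ (n-1))) 1 = 0 := by
      simp only []
      rw [show (1:ℕ)-1 = 0 from rfl]
      linear_combination h - hs1
    have hxs : ∑ i ∈ Finset.range d,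
        ((fun n => (θ d - θ 0) * (θs n - θs (n-1)) - (θs d - θs 0) * (θ n - θ (n-1))) (i+1)) = 0 := by
      rw [show (∑ i ∈ Finset.range d,
          ((fun n => (θ d - θ 0) * (θs n - θs (n-1)) - (θs d - θs 0) * (θ n - θ (n-1))) (i+1)))
          = ∑ i ∈ Finset.range d,
            ((fun n => (θ d - θ 0) * θs n - (θs d - θs 0) * θ n) (i+1)
              - (fun n => (θ d - θ 0) * θs n - (θs d - θs 0) * θ n) i) from
        Finset.sum_congr rfl (fun i _ => by simp only []; rw [show i+1-1 = i from rfl]; ring)]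
      rw [Finset.sum_range_sub (fun n => (θ d - θ 0) * θs n - (θs d - θs 0) * θ n) d]
      ring
    have hcore := core d hd3 ((θ 0 - θ 3)/(θ 1 - θ 2) - 1)
      (fun n => θ n - θ (n-1))
      (fun n => (θ d - θ 0) * (θs n - θs (n-1)) - (θs d - θs 0) * (θ n - θ (n-1)))
      hΔ hδ h1 h2 hx1 hxs
    intro i
    induction i with
    | zero => intro _; ring
    | succ n ihn =>
      intro hid
      have hδ0 := hcore (n+1) (by omega) hid
      rw [show n+1-1 = n from rfl] at hδ0
      have hsn := ihn (by omega)
      linear_combination hsn + hδ0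

lemma lemA' (d : ℕ) (hd : 1 ≤ d) (θ θs φ ϕ : ℕ → K)
    (hPA : IsParamArray K d θ θs φ ϕ) (h : φ 1 = φ d) :
    ∀ i ≤ d, (θs i - θs 0) * (θ d - θ 0) = (θs d - θs 0) * (θ d - θ (d - i)) := by
  have ht1 := t1_id d θ θs φ ϕ hd hPA
  obtain ⟨-, pa2, -, -, pa5⟩ := hPA
  rcases Nat.lt_or_ge d 3 with hd3 | hd3
  · intro i hid
    interval_cases d
    · interval_cases i
      · norm_num
      · norm_num
    · interval_cases i
      · norm_num
      · norm_num
        linear_combination ht1 - h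
      · norm_num
  · have hrecθ : ∀ i, 2 ≤ i → i ≤ d - 1 →
        θ (i-2) - θ (i+1) = ((θ 0 - θ 3)/(θ 1 - θ 2)) * (θ (i-1) - θ i) := by
      intro i h2 h3
      have hne : θ (i-1) ≠ θ i := (pa2 (i-1) i (by omega) (by omega) (by omega)).1
      have hr := (pa5 i 2 h2 h3 le_rfl (by omega)).2
      norm_num at hr
      rw [div_eq_iff (sub_ne_zero.mpr hne)] at hr
      exact hr
    have hrecθs : ∀ i, 2 ≤ i → i ≤ d - 1 →
        θs (i-2) - θs (i+1) = ((θ 0 - θ 3)/(θ 1 - θ 2)) * (θs (i-1) - θs i) := by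
      intro i h2 h3
      have hne : θs (i-1) ≠ θs i := (pa2 (i-1) i (by omega) (by omega) (by omega)).2
      have hr1 := (pa5 i 2 h2 h3 le_rfl (by omega)).1
      have hr2 := (pa5 i 2 h2 h3 le_rfl (by omega)).2
      norm_num at hr2
      have hr := hr1.symm.trans hr2
      rw [div_eq_iff (sub_ne_zero.mpr hne)] at hr
      exact hr
    have hΔ : ∀ i, 2 ≤ i → i ≤ d - 1 →
        (fun n => θ n - θ (n-1)) (i+1) = ((θ 0 - θ 3)/(θ 1 - θ 2) - 1) * (fun n => θ n - θ (n-1)) i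
          - (fun n => θ n - θ (n-1)) (i-1) := by
      intro i h2 h3
      simp only []
      rw [show i+1-1 = i from rfl, show i-1-1 = i-2 by omega]
      linear_combination - hrecθ i h2 h3
    have hτ : ∀ i, 2 ≤ i → i ≤ d - 1 →
        (fun n => (θ d - θ 0) * (θs n - θs (n-1)) - (θs d - θs 0) * (θ (d-n+1) - θ (d-n))) (i+1)
          = ((θ 0 - θ 3)/(θ 1 - θ 2) - 1) *
            (fun n => (θ d - θ 0) * (θs n - θs (n-1)) - (θs d - θs 0) * (θ (d-n+1) - θ (d-n))) i
          - (fun n => (θ d - θ 0) * (θs n - θs (n-1)) - (θs d - θs 0) * (θ (d-n+1) - θ (d-n))) (i-1) := by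
      intro i h2 h3
      have hθi := hrecθ (d+1-i) (by omega) (by omega)
      have hsi := hrecθs i h2 h3
      obtain ⟨m, rfl⟩ : ∃ m, d = i + 1 + m := ⟨d - (i+1), by omega⟩
      simp only []
      rw [show i+1-1 = i from rfl, show i-1-1 = i-2 by omega,
        show i+1+m-(i+1)+1 = m+1 by omega, show i+1+m-(i+1) = m by omega,
        show i+1+m-i+1 = m+2 by omega, show i+1+m-i = m+1 by omega,
        show i+1+m-(i-1)+1 = m+3 by omega, show i+1+m-(i-1) = m+2 by omega]
      rw [show i+1+m+1-i = m+2 by omega] at hθi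
      rw [show m+2-2 = m from rfl, show m+2-1 = m+1 from rfl] at hθi
      linear_combination (θs (i+1+m) - θs 0) * hθi - (θ (i+1+m) - θ 0) * hsi
    have h1 : ∑ i ∈ Finset.range d, ((fun n => θ n - θ (n-1)) (i+1)) ≠ 0 := by
      rw [show (∑ i ∈ Finset.range d, ((fun n => θ n - θ (n-1)) (i+1)))
          = ∑ i ∈ Finset.range d, (θ (i+1) - θ i) from Finset.sum_congr rfl (fun i _ => rfl)]
      rw [Finset.sum_range_sub θ d]
      exact sub_ne_zero.mpr ((pa2 d 0 le_rfl (by omega) (by omega)).1)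
    have h2 : ∑ i ∈ Finset.range (d-1), ((fun n => θ n - θ (n-1)) (i+2)) ≠ 0 := by
      rw [show (∑ i ∈ Finset.range (d-1), ((fun n => θ n - θ (n-1)) (i+2)))
          = ∑ i ∈ Finset.range (d-1), (θ (i+1+1) - θ (i+1)) from Finset.sum_congr rfl (fun i _ => rfl)]
      rw [Finset.sum_range_sub (fun n => θ (n+1)) (d-1)]
      rw [show d-1+1 = d by omega, show (0:ℕ)+1 = 1 from rfl]
      exact sub_ne_zero.mpr ((pa2 d 1 le_rfl (by omega) (by omega)).1)
    have hx1 : (fun n => (θ d - θ 0) * (θs n - θs (n-1)) - (θs d - θs 0) * (θ (d-n+1) - θ (d-n))) 1 = 0 := by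
      simp only []
      rw [show (1:ℕ)-1 = 0 from rfl, show d-1+1 = d by omega]
      linear_combination ht1 - h
    have hxs : ∑ i ∈ Finset.range d,
        ((fun n => (θ d - θ 0) * (θs n - θs (n-1)) - (θs d - θs 0) * (θ (d-n+1) - θ (d-n))) (i+1)) = 0 := by
      rw [show (∑ i ∈ Finset.range d,
          ((fun n => (θ d - θ 0) * (θs n - θs (n-1)) - (θs d - θs 0) * (θ (d-n+1) - θ (d-n))) (i+1)))
          = ∑ i ∈ Finset.range d,
            ((fun n => (θ d - θ 0) * θs n + (θs d - θs 0) * θ (d-n)) (i+1)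
              - (fun n => (θ d - θ 0) * θs n + (θs d - θs 0) * θ (d-n)) i) from
        Finset.sum_congr rfl (fun i hi => by
          simp only [Finset.mem_range] at hi
          simp only []
          rw [show i+1-1 = i from rfl, show d-(i+1)+1 = d-i by omega]
          ring)]
      rw [Finset.sum_range_sub (fun n => (θ d - θ 0) * θs n + (θs d - θs 0) * θ (d-n)) d]
      rw [Nat.sub_self, Nat.sub_zero]
      ring
    have hcore := core d hd3 ((θ 0 - θ 3)/(θ 1 - θ 2) - 1)
      (fun n => θ n - θ (n-1))
      (fun n => (θ d - θ 0) * (θs n - θs (n-1)) - (θs d - θs 0) * (θ (d-n+1) - θ (d-n)))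
      hΔ hτ h1 h2 hx1 hxs
    intro i
    induction i with
    | zero => intro _; rw [Nat.sub_zero]; ring
    | succ n ihn =>
      intro hid
      have hτ0 := hcore (n+1) (by omega) hid
      rw [show n+1-1 = n from rfl, show d-(n+1)+1 = d-n by omega] at hτ0
      have hsn := ihn (by omega)
      linear_combination hsn + hτ0


end LeonardSwapAux


open LeonardSwapAux in
/-- The Leonard pair `A*, A` is isomorphic to the affine transformation
`ξA+ζI, ξ*A*+ζ*I` (i.e. one of the four associated parameter arrays
`P^*, P^↓*, P^⇓*, P^↓⇓*` equals the affinely transformed array) if and only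
if at least one — and then exactly one — of conditions (i)–(iv) holds,
where `α = (θ*_d − θ*_0)(θ_d − θ_0)⁻¹`. -/
theorem leonard_pair_affine_swap {K : Type*} [Field K] (d : ℕ) (hd : 1 ≤ d)
    (θ θs φ ϕ : ℕ → K) (hPA : IsParamArray K d θ θs φ ϕ)
    (ξ ζ ξs ζs : K) (hξ : ξ ≠ 0) (hξs : ξs ≠ 0)
    (α : K) (hα : α = (θs d - θs 0) * (θ d - θ 0)⁻¹) :
    ((EqPA K d (θs, θ, φ, fun i => ϕ (d - i + 1)) (fun i => ξ * θ i + ζ, fun i => ξs * θs i + ζs, fun i => ξ * ξs * φ i, fun i => ξ * ξs * ϕ i) ∨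
      EqPA K d (fun i => θs (d - i), θ, fun i => ϕ (d - i + 1), φ) (fun i => ξ * θ i + ζ, fun i => ξs * θs i + ζs, fun i => ξ * ξs * φ i, fun i => ξ * ξs * ϕ i) ∨
      EqPA K d (θs, fun i => θ (d - i), ϕ, fun i => φ (d - i + 1)) (fun i => ξ * θ i + ζ, fun i => ξs * θs i + ζs, fun i => ξ * ξs * φ i, fun i => ξ * ξs * ϕ i) ∨
      EqPA K d (fun i => θs (d - i), fun i => θ (d - i),
        fun i => φ (d - i + 1), ϕ) (fun i => ξ * θ i + ζ, fun i => ξs * θs i + ζs, fun i => ξ * ξs * φ i, fun i => ξ * ξs * ϕ i))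
      ↔ ((ϕ 1 = ϕ d ∧ ξ = α ∧ ζ = θs 0 - α * θ 0 ∧ ξs = α⁻¹ ∧ ζs = θ 0 - α⁻¹ * θs 0) ∨ (φ 1 = φ d ∧ φ 1 = -ϕ 1 ∧ φ 1 = -ϕ d ∧ ξ = -α ∧ ζ = θs d + α * θ 0 ∧ ξs = α⁻¹ ∧ ζs = θ 0 - α⁻¹ * θs 0) ∨ (φ 1 = φ d ∧ φ 1 = -ϕ 1 ∧ φ 1 = -ϕ d ∧ ξ = α ∧ ζ = θs 0 - α * θ 0 ∧ ξs = -α⁻¹ ∧ ζs = θ 0 + α⁻¹ * θs d) ∨ (φ 1 = φ d ∧ ξ = -α ∧ ζ = θs d + α * θ 0 ∧ ξs = -α⁻¹ ∧ ζs = θ 0 + α⁻¹ * θs d))) ∧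
    -- in this case precisely one of (i)–(iv) holds
    (((ϕ 1 = ϕ d ∧ ξ = α ∧ ζ = θs 0 - α * θ 0 ∧ ξs = α⁻¹ ∧ ζs = θ 0 - α⁻¹ * θs 0) ∨ (φ 1 = φ d ∧ φ 1 = -ϕ 1 ∧ φ 1 = -ϕ d ∧ ξ = -α ∧ ζ = θs d + α * θ 0 ∧ ξs = α⁻¹ ∧ ζs = θ 0 - α⁻¹ * θs 0) ∨ (φ 1 = φ d ∧ φ 1 = -ϕ 1 ∧ φ 1 = -ϕ d ∧ ξ = α ∧ ζ = θs 0 - α * θ 0 ∧ ξs = -α⁻¹ ∧ ζs = θ 0 + α⁻¹ * θs d) ∨ (φ 1 = φ d ∧ ξ = -α ∧ ζ = θs d + α * θ 0 ∧ ξs = -α⁻¹ ∧ ζs = θ 0 + α⁻¹ * θs d)) →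
      (¬((ϕ 1 = ϕ d ∧ ξ = α ∧ ζ = θs 0 - α * θ 0 ∧ ξs = α⁻¹ ∧ ζs = θ 0 - α⁻¹ * θs 0) ∧ (φ 1 = φ d ∧ φ 1 = -ϕ 1 ∧ φ 1 = -ϕ d ∧ ξ = -α ∧ ζ = θs d + α * θ 0 ∧ ξs = α⁻¹ ∧ ζs = θ 0 - α⁻¹ * θs 0)) ∧ ¬((ϕ 1 = ϕ d ∧ ξ = α ∧ ζ = θs 0 - α * θ 0 ∧ ξs = α⁻¹ ∧ ζs = θ 0 - α⁻¹ * θs 0) ∧ (φ 1 = φ d ∧ φ 1 = -ϕ 1 ∧ φ 1 = -ϕ d ∧ ξ = α ∧ ζ = θs 0 - α * θ 0 ∧ ξs = -α⁻¹ ∧ ζs = θ 0 + α⁻¹ * θs d)) ∧ ¬((ϕ 1 = ϕ d ∧ ξ = α ∧ ζ = θs 0 - α * θ 0 ∧ ξs = α⁻¹ ∧ ζs = θ 0 - α⁻¹ * θs 0) ∧ (φ 1 = φ d ∧ ξ = -α ∧ ζ = θs d + α * θ 0 ∧ ξs = -α⁻¹ ∧ ζs = θ 0 + α⁻¹ * θs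 d)) ∧
       ¬((φ 1 = φ d ∧ φ 1 = -ϕ 1 ∧ φ 1 = -ϕ d ∧ ξ = -α ∧ ζ = θs d + α * θ 0 ∧ ξs = α⁻¹ ∧ ζs = θ 0 - α⁻¹ * θs 0) ∧ (φ 1 = φ d ∧ φ 1 = -ϕ 1 ∧ φ 1 = -ϕ d ∧ ξ = α ∧ ζ = θs 0 - α * θ 0 ∧ ξs = -α⁻¹ ∧ ζs = θ 0 + α⁻¹ * θs d)) ∧ ¬((φ 1 = φ d ∧ φ 1 = -ϕ 1 ∧ φ 1 = -ϕ d ∧ ξ = -α ∧ ζ = θs d + α * θ 0 ∧ ξs = α⁻¹ ∧ ζs = θ 0 - α⁻¹ * θs 0) ∧ (φ 1 = φ d ∧ ξ = -α ∧ ζ = θs d + α * θ 0 ∧ ξs = -α⁻¹ ∧ ζs = θ 0 + α⁻¹ * θs d)) ∧ ¬((φ 1 = φ d ∧ φ 1 = -ϕ 1 ∧ φ 1 = -ϕ d ∧ ξ = α ∧ ζ = θs 0 - α * θ 0 ∧ ξs = -α⁻¹ ∧ ζs = θ 0 + α⁻¹ * θs d) ∧ (φ 1 = φ d ∧ ξ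 = -α ∧ ζ = θs d + α * θ 0 ∧ ξs = -α⁻¹ ∧ ζs = θ 0 + α⁻¹ * θs d)))) := by
  have hPA' := hPA
  obtain ⟨pa1, pa2, pa3, pa4, pa5⟩ := hPA
  have h0d : θ 0 ≠ θ d := (pa2 0 d (by omega) le_rfl (by omega)).1
  have hs0dne : θs 0 ≠ θs d := (pa2 0 d (by omega) le_rfl (by omega)).2
  have hB : θ d - θ 0 ≠ 0 := sub_ne_zero.mpr (Ne.symm h0d)
  have hAne : θs d - θs 0 ≠ 0 := sub_ne_zero.mpr (Ne.symm hs0dne)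
  have hα0 : α ≠ 0 := by rw [hα]; exact mul_ne_zero hAne (inv_ne_zero hB)
  have hαB : α * (θ d - θ 0) = θs d - θs 0 := by
    rw [hα, mul_assoc, inv_mul_cancel₀ hB, mul_one]
  have hinv : α⁻¹ * α = 1 := inv_mul_cancel₀ hα0
  have mkkey : (∀ i ≤ d, (θs i - θs 0) * (θ d - θ 0) = (θs d - θs 0) * (θ i - θ 0)) →
      ∀ i ≤ d, θs i - θs 0 = α * (θ i - θ 0) := by
    intro hs i hi
    apply mul_right_cancel₀ hB
    linear_combination hs i hi - (θ i - θ 0) * hαB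
  have mkkey' : (∀ i ≤ d, (θs i - θs 0) * (θ d - θ 0) = (θs d - θs 0) * (θ d - θ (d - i))) →
      ∀ i ≤ d, θs i - θs 0 = α * (θ d - θ (d - i)) := by
    intro hs i hi
    apply mul_right_cancel₀ hB
    linear_combination hs i hi - (θ d - θ (d - i)) * hαB
  have exA : ξ = α → ξ = -α → ζ = θs 0 - α * θ 0 → ζ = θs d + α * θ 0 → False := by
    intro ha hb hza hzb
    have h2 : α + α = 0 := by linear_combination hb - ha
    have : θs 0 = θs d := by linear_combination hzb - hza + θ 0 * h2
    exact hs0dne this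
  have exB : ξs = α⁻¹ → ξs = -α⁻¹ → ζs = θ 0 - α⁻¹ * θs 0 → ζs = θ 0 + α⁻¹ * θs d → False := by
    intro ha hb hza hzb
    have h2 : α⁻¹ + α⁻¹ = 0 := by linear_combination hb - ha
    have : α⁻¹ * (θs d - θs 0) = 0 := by linear_combination hza - hzb - θs 0 * h2
    exact (mul_ne_zero (inv_ne_zero hα0) hAne) this
  constructor
  · constructor
    · -- forward direction
      rintro (h | h | h | h)
      · -- case 1 : P^*
        left
        have h' : (∀ i ≤ d, θs i = ξ * θ i + ζ ∧ θ i = ξs * θs i + ζs) ∧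
            (∀ i, 1 ≤ i → i ≤ d → φ i = ξ * ξs * φ i ∧ ϕ (d-i+1) = ξ * ξs * ϕ i) := h
        have e0 := (h'.1 0 (by omega)).1
        have ed := (h'.1 d le_rfl).1
        have f0 := (h'.1 0 (by omega)).2
        have fd := (h'.1 d le_rfl).2
        have hξα : ξ = α := by
          apply mul_right_cancel₀ hB
          rw [hαB]
          linear_combination e0 - ed
        have hζv : ζ = θs 0 - α * θ 0 := by linear_combination -e0 - θ 0 * hξα
        have hξsα : ξs = α⁻¹ := by
          have h1 : (α * ξs) * (θ d - θ 0) = 1 * (θ d - θ 0) := by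
            linear_combination ξs * hαB - fd + f0
          exact ((inv_eq_of_mul_eq_one_right (mul_right_cancel₀ hB h1)).symm)
        have hζsv : ζs = θ 0 - α⁻¹ * θs 0 := by linear_combination -f0 - θs 0 * hξsα
        have hunit : ξ * ξs = 1 := by rw [hξα, hξsα]; exact mul_inv_cancel₀ hα0
        have hϕd := (h'.2 1 le_rfl hd).2
        rw [show d-1+1 = d by omega, hunit, one_mul] at hϕd
        exact ⟨hϕd.symm, hξα, hζv, hξsα, hζsv⟩
      · -- case 2 : P^↓*
        right; left
        have h' : (∀ i ≤ d, θs (d-i) = ξ * θ i + ζ ∧ θ i = ξs * θs i + ζs) ∧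
            (∀ i, 1 ≤ i → i ≤ d → ϕ (d-i+1) = ξ * ξs * φ i ∧ φ i = ξ * ξs * ϕ i) := h
        have e0 := (h'.1 0 (by omega)).1
        rw [Nat.sub_zero] at e0
        have ed := (h'.1 d le_rfl).1
        rw [Nat.sub_self] at ed
        have f0 := (h'.1 0 (by omega)).2
        have fd := (h'.1 d le_rfl).2
        have hξα : ξ = -α := by
          apply mul_right_cancel₀ hB
          linear_combination e0 - ed + hαB
        have hζv : ζ = θs d + α * θ 0 := by linear_combination -e0 - θ 0 * hξα
        have hξsα : ξs = α⁻¹ := by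
          have h1 : (α * ξs) * (θ d - θ 0) = 1 * (θ d - θ 0) := by
            linear_combination ξs * hαB - fd + f0
          exact ((inv_eq_of_mul_eq_one_right (mul_right_cancel₀ hB h1)).symm)
        have hζsv : ζs = θ 0 - α⁻¹ * θs 0 := by linear_combination -f0 - θs 0 * hξsα
        have hunit : ξ * ξs = -1 := by
          rw [hξα, hξsα, neg_mul, mul_inv_cancel₀ hα0]
        have g1 := h'.2 1 le_rfl hd
        have gd := h'.2 d hd le_rfl
        rw [show d-1+1 = d by omega, hunit] at g1
        rw [show d-d+1 = 1 by omega, hunit] at gd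
        refine ⟨?_, ?_, ?_, hξα, hζv, hξsα, hζsv⟩
        · linear_combination g1.2 - gd.1
        · linear_combination g1.2
        · linear_combination gd.2 + g1.2 - gd.1
      · -- case 3 : P^⇓*
        right; right; left
        have h' : (∀ i ≤ d, θs i = ξ * θ i + ζ ∧ θ (d-i) = ξs * θs i + ζs) ∧
            (∀ i, 1 ≤ i → i ≤ d → ϕ i = ξ * ξs * φ i ∧ φ (d-i+1) = ξ * ξs * ϕ i) := h
        have e0 := (h'.1 0 (by omega)).1
        have ed := (h'.1 d le_rfl).1
        have f0 := (h'.1 0 (by omega)).2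
        rw [Nat.sub_zero] at f0
        have fd := (h'.1 d le_rfl).2
        rw [Nat.sub_self] at fd
        have hξα : ξ = α := by
          apply mul_right_cancel₀ hB
          rw [hαB]
          linear_combination e0 - ed
        have hζv : ζ = θs 0 - α * θ 0 := by linear_combination -e0 - θ 0 * hξα
        have hξsα : ξs = -α⁻¹ := by
          have h1 : α * (-ξs) = 1 := by
            apply mul_right_cancel₀ hB
            linear_combination -ξs * hαB + fd - f0
          have h2 := (inv_eq_of_mul_eq_one_right h1).symm
          linear_combination -h2
        have hζsv : ζs = θ 0 + α⁻¹ * θs d := by linear_combination -fd - θs d * hξsα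
        have hunit : ξ * ξs = -1 := by
          rw [hξα, hξsα, mul_neg, mul_inv_cancel₀ hα0]
        have g1 := h'.2 1 le_rfl hd
        have gd := h'.2 d hd le_rfl
        rw [show d-1+1 = d by omega, hunit] at g1
        rw [show d-d+1 = 1 by omega, hunit] at gd
        refine ⟨?_, ?_, ?_, hξα, hζv, hξsα, hζsv⟩
        · linear_combination g1.1 - g1.2
        · linear_combination g1.1
        · linear_combination g1.1 - g1.2 + gd.1
      · -- case 4 : P^↓⇓*
        right; right; right
        have h' : (∀ i ≤ d, θs (d-i) = ξ * θ i + ζ ∧ θ (d-i) = ξs * θs i + ζs) ∧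
            (∀ i, 1 ≤ i → i ≤ d → φ (d-i+1) = ξ * ξs * φ i ∧ ϕ i = ξ * ξs * ϕ i) := h
        have e0 := (h'.1 0 (by omega)).1
        rw [Nat.sub_zero] at e0
        have ed := (h'.1 d le_rfl).1
        rw [Nat.sub_self] at ed
        have f0 := (h'.1 0 (by omega)).2
        rw [Nat.sub_zero] at f0
        have fd := (h'.1 d le_rfl).2
        rw [Nat.sub_self] at fd
        have hξα : ξ = -α := by
          apply mul_right_cancel₀ hB
          linear_combination e0 - ed + hαB
        have hζv : ζ = θs d + α * θ 0 := by linear_combination -e0 - θ 0 * hξα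
        have hξsα : ξs = -α⁻¹ := by
          have h1 : α * (-ξs) = 1 := by
            apply mul_right_cancel₀ hB
            linear_combination -ξs * hαB + fd - f0
          have h2 := (inv_eq_of_mul_eq_one_right h1).symm
          linear_combination -h2
        have hζsv : ζs = θ 0 + α⁻¹ * θs d := by linear_combination -fd - θs d * hξsα
        have hunit : ξ * ξs = 1 := by
          rw [hξα, hξsα, neg_mul_neg]; exact mul_inv_cancel₀ hα0
        have g1 := (h'.2 1 le_rfl hd).1
        rw [show d-1+1 = d by omega, hunit, one_mul] at g1
        exact ⟨g1.symm, hξα, hζv, hξsα, hζsv⟩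
    · -- reverse direction
      rintro (⟨h1, h2, h3, h4, h5⟩ | ⟨h1, h2, h3, h4, h5, h6, h7⟩ |
        ⟨h1, h2, h3, h4, h5, h6, h7⟩ | ⟨h1, h2, h3, h4, h5⟩)
      · -- (i) ⇒ case 1
        left
        have key := mkkey (lemA d hd θ θs φ ϕ hPA' h1)
        have hunit : ξ * ξs = 1 := by rw [h2, h4]; exact mul_inv_cancel₀ hα0
        refine ⟨fun i hi => ⟨?_, ?_⟩, fun i hi1 hi2 => ⟨?_, ?_⟩⟩
        · show θs i = ξ * θ i + ζ
          rw [h2, h3]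
          linear_combination key i hi
        · show θ i = ξs * θs i + ζs
          rw [h4, h5]
          linear_combination -α⁻¹ * key i hi - (θ i - θ 0) * hinv
        · show φ i = ξ * ξs * φ i
          rw [hunit, one_mul]
        · show ϕ (d-i+1) = ξ * ξs * ϕ i
          rw [hunit, one_mul]
          have hstar := star_id d θ θs φ ϕ hd hPA' i hi1 hi2
          have k1 := key i (by omega)
          have k2 := key (d-i+1) (by omega)
          linear_combination -hstar - (θ (d-i+1) - θ 0) * k1 + (θ i - θ 0) * k2
      · -- (ii) ⇒ case 2
        right; left
        have hϕ1d : ϕ 1 = ϕ d := by linear_combination h2 - h3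
        have key := mkkey (lemA d hd θ θs φ ϕ hPA' hϕ1d)
        have key' := mkkey' (lemA' d hd θ θs φ ϕ hPA' h1)
        have hpal : ∀ j ≤ d, θ j - θ 0 = θ d - θ (d-j) := fun j hj =>
          mul_left_cancel₀ hα0 ((key j hj).symm.trans (key' j hj))
        have hunit : ξ * ξs = -1 := by rw [h4, h6, neg_mul, mul_inv_cancel₀ hα0]
        have hsum0 : ∀ i, 1 ≤ i → i ≤ d → φ i + ϕ i = 0 := by
          intro i hi1 hi2
          have hs := sum_id d θ θs φ ϕ hd hPA' i hi1 hi2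
          have hbr : (θ (i-1) - θ d) + (θ (d-i+1) - θ 0) = 0 := by
            have hp := hpal (i-1) (by omega)
            rw [show d-(i-1) = d-i+1 by omega] at hp
            linear_combination hp
          have hz : ϕ 1 + φ 1 = 0 := by linear_combination h2
          linear_combination hs + (∑ h ∈ Finset.range i, (θ h - θ (d - h)) / (θ 0 - θ d)) * hz
            + (θs i - θs 0) * hbr
        refine ⟨fun i hi => ⟨?_, ?_⟩, fun i hi1 hi2 => ⟨?_, ?_⟩⟩
        · show θs (d-i) = ξ * θ i + ζ
          rw [h4, h5]
          have k := key' (d-i) (by omega)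
          rw [show d-(d-i) = i by omega] at k
          linear_combination k + hαB
        · show θ i = ξs * θs i + ζs
          rw [h6, h7]
          linear_combination -α⁻¹ * key i hi - (θ i - θ 0) * hinv
        · show ϕ (d-i+1) = ξ * ξs * φ i
          rw [hunit]
          have hstar := star_id d θ θs φ ϕ hd hPA' i hi1 hi2
          have k1 := key i (by omega)
          have k2 := key (d-i+1) (by omega)
          have hsm := hsum0 i hi1 hi2
          linear_combination -hstar - (θ (d-i+1) - θ 0) * k1 + (θ i - θ 0) * k2 + hsm
        · show φ i = ξ * ξs * ϕ i
          rw [hunit]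
          linear_combination hsum0 i hi1 hi2
      · -- (iii) ⇒ case 3
        right; right; left
        have hϕ1d : ϕ 1 = ϕ d := by linear_combination h2 - h3
        have key := mkkey (lemA d hd θ θs φ ϕ hPA' hϕ1d)
        have key' := mkkey' (lemA' d hd θ θs φ ϕ hPA' h1)
        have hpal : ∀ j ≤ d, θ j - θ 0 = θ d - θ (d-j) := fun j hj =>
          mul_left_cancel₀ hα0 ((key j hj).symm.trans (key' j hj))
        have hunit : ξ * ξs = -1 := by rw [h4, h6, mul_neg, mul_inv_cancel₀ hα0]
        have hsum0 : ∀ i, 1 ≤ i → i ≤ d → φ i + ϕ i = 0 := by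
          intro i hi1 hi2
          have hs := sum_id d θ θs φ ϕ hd hPA' i hi1 hi2
          have hbr : (θ (i-1) - θ d) + (θ (d-i+1) - θ 0) = 0 := by
            have hp := hpal (i-1) (by omega)
            rw [show d-(i-1) = d-i+1 by omega] at hp
            linear_combination hp
          have hz : ϕ 1 + φ 1 = 0 := by linear_combination h2
          linear_combination hs + (∑ h ∈ Finset.range i, (θ h - θ (d - h)) / (θ 0 - θ d)) * hz
            + (θs i - θs 0) * hbr
        refine ⟨fun i hi => ⟨?_, ?_⟩, fun i hi1 hi2 => ⟨?_, ?_⟩⟩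
        · show θs i = ξ * θ i + ζ
          rw [h4, h5]
          linear_combination key i hi
        · show θ (d-i) = ξs * θs i + ζs
          rw [h6, h7]
          have kd := key' d le_rfl
          rw [Nat.sub_self] at kd
          have ki := key' i hi
          have hkd : θs d - θs i = α * (θ (d-i) - θ 0) := by linear_combination kd - ki
          linear_combination -α⁻¹ * hkd - (θ (d-i) - θ 0) * hinv
        · show ϕ i = ξ * ξs * φ i
          rw [hunit]
          linear_combination hsum0 i hi1 hi2
        · show φ (d-i+1) = ξ * ξs * ϕ i
          rw [hunit]
          have hstar' := star_id' d θ θs φ ϕ hd hPA' i hi1 hi2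
          have ki := key' i (by omega)
          have kj := key' (d-i+1) (by omega)
          rw [show d-(d-i+1) = i-1 by omega] at kj
          linear_combination -hstar' - (θ (i-1) - θ d) * ki + (θ (d-i) - θ d) * kj
            + hsum0 i hi1 hi2
      · -- (iv) ⇒ case 4
        right; right; right
        have key' := mkkey' (lemA' d hd θ θs φ ϕ hPA' h1)
        have hunit : ξ * ξs = 1 := by
          rw [h2, h4, neg_mul_neg]; exact mul_inv_cancel₀ hα0
        refine ⟨fun i hi => ⟨?_, ?_⟩, fun i hi1 hi2 => ⟨?_, ?_⟩⟩
        · show θs (d-i) = ξ * θ i + ζ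
          rw [h2, h3]
          have k := key' (d-i) (by omega)
          rw [show d-(d-i) = i by omega] at k
          linear_combination k + hαB
        · show θ (d-i) = ξs * θs i + ζs
          rw [h4, h5]
          have kd := key' d le_rfl
          rw [Nat.sub_self] at kd
          have ki := key' i hi
          have hkd : θs d - θs i = α * (θ (d-i) - θ 0) := by linear_combination kd - ki
          linear_combination -α⁻¹ * hkd - (θ (d-i) - θ 0) * hinv
        · show φ (d-i+1) = ξ * ξs * φ i
          rw [hunit, one_mul]
          have hstar' := star_id' d θ θs φ ϕ hd hPA' i hi1 hi2
          have ki := key' i (by omega)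
          have kj := key' (d-i+1) (by omega)
          rw [show d-(d-i+1) = i-1 by omega] at kj
          linear_combination -hstar' - (θ (i-1) - θ d) * ki + (θ (d-i) - θ d) * kj
        · show ϕ i = ξ * ξs * ϕ i
          rw [hunit, one_mul]
  · -- exclusivity
    intro _
    refine ⟨?_, ?_, ?_, ?_, ?_, ?_⟩
    · rintro ⟨⟨-, ha, hza, -, -⟩, ⟨-, -, -, hb, hzb, -, -⟩⟩
      exact exA ha hb hza hzb
    · rintro ⟨⟨-, -, -, ha, hza⟩, ⟨-, -, -, -, -, hb, hzb⟩⟩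
      exact exB ha hb hza hzb
    · rintro ⟨⟨-, ha, hza, -, -⟩, ⟨-, hb, hzb, -, -⟩⟩
      exact exA ha hb hza hzb
    · rintro ⟨⟨-, -, -, ha, hza, -, -⟩, ⟨-, -, -, hb, hzb, -, -⟩⟩
      exact exA hb ha hzb hza
    · rintro ⟨⟨-, -, -, -, -, ha, hza⟩, ⟨-, -, -, hb, hzb⟩⟩
      exact exB ha hb hza hzb
    · rintro ⟨⟨-, -, -, ha, hza, -, -⟩, ⟨-, hb, hzb, -, -⟩⟩
      exact exA ha hb hza hzb
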